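/- Let α ∈ (0, 1/2), for each positive integer n let t_n* ∈ (0, n) be the unique solution of P_n(t_n*) = α. Then lim_{n→∞} (1/n)·log V_n(t_n*) = h_max(α); i.e., the logarithm of the maximum shaping gain V_n(t_n*)^{1/n}/(2α) converges to h_max(α) − log(2α) as n → ∞. -/

import Mathlib

open MeasureTheory Filter

/-- The truncated cube `𝒯_n(t) = {x ∈ [0,1]^n : ∑ i, x i ≤ t}`. -/
def truncCube (n : ℕ) (t : ℝ) : Set (Fin n → ℝ) :=
  {x | (∀ i, x i ∈ Set.Icc (0 : ℝ) 1) ∧ ∑ i, x i ≤ t}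

/-- Volume of the truncated cube. -/
noncomputable def truncVol (n : ℕ) (t : ℝ) : ℝ :=
  (volume (truncCube n t)).toReal

/-- Average first moment of the truncated cube. -/
noncomputable def truncMoment (n : ℕ) (t : ℝ) : ℝ :=
  (1 / (n * truncVol n t)) * ∫ x in truncCube n t, ∑ i, x i

open scoped ENNReal

noncomputable def Mf (l : ℝ) : ℝ := (1 - Real.exp (-l)) / l
noncomputable def mf (l : ℝ) : ℝ := 1 / l - 1 / (Real.exp l - 1)

lemma exp_lt_one_of_pos {l : ℝ} (hl : 0 < l) : Real.exp (-l) < 1 := by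
  rw [Real.exp_lt_one_iff]; linarith

lemma Mf_pos {l : ℝ} (hl : 0 < l) : 0 < Mf l :=
  div_pos (by linarith [exp_lt_one_of_pos hl]) hl

lemma expl_ne_one {l : ℝ} (hl : 0 < l) : Real.exp l - 1 > 0 := by
  have := Real.add_one_lt_exp (x := l) (by positivity)
  linarith

lemma mf_nonneg {l : ℝ} (hl : 0 < l) : 0 ≤ mf l := by
  have h1 : l ≤ Real.exp l - 1 := by have := Real.add_one_le_exp l; linarith
  have h2 : 1 / (Real.exp l - 1) ≤ 1 / l := by
    apply one_div_le_one_div_of_le hl h1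
  simp only [mf]; linarith

-- 1D integrals
lemma integral_exp_Icc {l : ℝ} (hl : 0 < l) :
    ∫ s in Set.Icc (0:ℝ) 1, Real.exp (-(l * s)) = Mf l := by
  rw [MeasureTheory.integral_Icc_eq_integral_Ioc,
    ← intervalIntegral.integral_of_le (by norm_num : (0:ℝ) ≤ 1)]
  have h : ∀ x ∈ Set.uIcc (0:ℝ) 1, HasDerivAt (fun s => -(1/l) * Real.exp (-(l * s)))
      (Real.exp (-(l * x))) x := by
    intro x _
    have h1 : HasDerivAt (fun s : ℝ => -(l * s)) (-l) x := by
      simpa using ((hasDerivAt_id x).const_mul l).fun_neg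
    have h2 := (Real.hasDerivAt_exp (-(l * x))).comp x h1
    have h3 := h2.const_mul (-(1/l))
    refine h3.congr_deriv ?_
    field_simp
  rw [intervalIntegral.integral_eq_sub_of_hasDerivAt h]
  · simp only [Mf]
    rw [mul_one, mul_zero, neg_zero, Real.exp_zero]
    field_simp
    ring
  · apply Continuous.intervalIntegrable
    continuity

lemma integral_id_exp_Icc {l : ℝ} (hl : 0 < l) :
    ∫ s in Set.Icc (0:ℝ) 1, s * Real.exp (-(l * s))
      = (1 - (1 + l) * Real.exp (-l)) / l ^ 2 := by
  rw [MeasureTheory.integral_Icc_eq_integral_Ioc,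
    ← intervalIntegral.integral_of_le (by norm_num : (0:ℝ) ≤ 1)]
  have h : ∀ x ∈ Set.uIcc (0:ℝ) 1, HasDerivAt
      (fun s => -(s/l) * Real.exp (-(l * s)) - (1/l^2) * Real.exp (-(l * s)))
      (x * Real.exp (-(l * x))) x := by
    intro x _
    have h1 : HasDerivAt (fun s : ℝ => -(l * s)) (-l) x := by
      simpa using ((hasDerivAt_id x).const_mul l).fun_neg
    have he : HasDerivAt (fun s : ℝ => Real.exp (-(l * s)))
        (Real.exp (-(l * x)) * (-l)) x := by
        have h := (Real.hasDerivAt_exp (-(l * x))).comp x h1; exact h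
    have ha : HasDerivAt (fun s : ℝ => -(s/l)) (-(1/l)) x := by
      simpa using ((hasDerivAt_id x).div_const l).fun_neg
    have hm := ha.mul he
    have hb := he.const_mul (1/l^2)
    have := hm.sub hb
    refine this.congr_deriv ?_
    field_simp
    ring
  rw [intervalIntegral.integral_eq_sub_of_hasDerivAt h]
  · rw [mul_one, mul_zero, neg_zero, Real.exp_zero]
    field_simp
    ring
  · apply Continuous.intervalIntegrable
    continuity

lemma integral_centered_exp {l : ℝ} (hl : 0 < l) :
    ∫ s in Set.Icc (0:ℝ) 1, (s - mf l) * Real.exp (-(l * s)) = 0 := by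
  have hInt1 : IntegrableOn (fun s : ℝ => s * Real.exp (-(l * s))) (Set.Icc 0 1) := by
    apply ContinuousOn.integrableOn_compact isCompact_Icc
    fun_prop
  have hInt2 : IntegrableOn (fun s : ℝ => Real.exp (-(l * s))) (Set.Icc (0:ℝ) 1) := by
    apply ContinuousOn.integrableOn_compact isCompact_Icc
    fun_prop
  have : ∀ s : ℝ, (s - mf l) * Real.exp (-(l * s))
      = s * Real.exp (-(l * s)) - mf l * Real.exp (-(l * s)) := by intro s; ring
  simp only [this]
  rw [MeasureTheory.integral_sub hInt1 (hInt2.const_mul _), MeasureTheory.integral_const_mul,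
    integral_exp_Icc hl, integral_id_exp_Icc hl]
  have hE : Real.exp l - 1 > 0 := expl_ne_one hl
  have hne : Real.exp l ≠ 0 := (Real.exp_pos l).ne'
  have hexp : Real.exp (-l) = (Real.exp l)⁻¹ := Real.exp_neg l
  simp only [mf, Mf, hexp]
  field_simp
  ring

lemma mf_hasDerivAt {x : ℝ} (hx : 0 < x) :
    HasDerivAt mf (-(x^2)⁻¹ + Real.exp x / (Real.exp x - 1)^2) x := by
  have hE : Real.exp x - 1 > 0 := expl_ne_one hx
  have h1 : HasDerivAt (fun y : ℝ => 1 / y) (-(x^2)⁻¹) x := by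
    simpa [one_div] using hasDerivAt_inv hx.ne'
  have h2 : HasDerivAt (fun y : ℝ => Real.exp y - 1) (Real.exp x) x :=
    (Real.hasDerivAt_exp x).sub_const 1
  have h3 : HasDerivAt (fun y : ℝ => (Real.exp y - 1)⁻¹)
      (-(Real.exp x) / (Real.exp x - 1)^2) x := h2.inv hE.ne'
  have h4 : HasDerivAt (fun y : ℝ => 1 / (Real.exp y - 1))
      (-(Real.exp x) / (Real.exp x - 1)^2) x := by simpa [one_div] using h3
  have := h1.sub h4
  refine this.congr_deriv ?_
  field_simp
  ring

lemma mf_deriv_neg {x : ℝ} (hx : 0 < x) :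
    -(x^2)⁻¹ + Real.exp x / (Real.exp x - 1)^2 < 0 := by
  have hE : Real.exp x - 1 > 0 := expl_ne_one hx
  -- key : x^2 * exp x < (exp x - 1)^2
  have hsinh : x / 2 < Real.sinh (x / 2) := (Real.self_lt_sinh_iff).2 (by linarith)
  have hsh : Real.sinh (x/2) = (Real.exp (x/2) - Real.exp (-(x/2))) / 2 := Real.sinh_eq _
  have hkey : x * Real.exp (x/2) < Real.exp x - 1 := by
    have h2 : x * Real.exp (x/2) < (Real.exp (x/2) - Real.exp (-(x/2))) * Real.exp (x/2) := by
      apply mul_lt_mul_of_pos_right _ (Real.exp_pos _)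
      rw [hsh] at hsinh; linarith
    calc x * Real.exp (x/2) < (Real.exp (x/2) - Real.exp (-(x/2))) * Real.exp (x/2) := h2
      _ = Real.exp x - 1 := by
          rw [sub_mul, ← Real.exp_add, ← Real.exp_add]
          norm_num
  have hx2 : 0 < x * Real.exp (x/2) := by positivity
  have hsq : (x * Real.exp (x/2))^2 < (Real.exp x - 1)^2 := by
    apply pow_lt_pow_left₀ hkey (le_of_lt hx2)
    norm_num
  have hsq' : x^2 * Real.exp x < (Real.exp x - 1)^2 := by
    have h5 : Real.exp (x/2) ^ 2 = Real.exp x := by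
      rw [sq, ← Real.exp_add]; norm_num
    have : (x * Real.exp (x/2))^2 = x^2 * Real.exp x := by
      rw [mul_pow, h5]
    linarith [this ▸ hsq]
  have h1 : Real.exp x / (Real.exp x - 1)^2 < (x^2)⁻¹ := by
    rw [div_lt_iff₀ (by positivity), inv_mul_eq_div, lt_div_iff₀ (by positivity : (0:ℝ) < x^2)]
    linarith
  linarith
lemma mf_strictAntiOn : StrictAntiOn mf (Set.Ioi (0:ℝ)) := by
  apply strictAntiOn_of_deriv_neg (convex_Ioi 0)
  · intro x hx
    exact (mf_hasDerivAt hx).continuousAt.continuousWithinAt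
  · intro x hx
    rw [interior_Ioi] at hx
    rw [(mf_hasDerivAt hx).deriv]
    exact mf_deriv_neg hx

lemma mf_continuousAt {x : ℝ} (hx : 0 < x) : ContinuousAt mf x :=
  (mf_hasDerivAt hx).continuousAt

lemma Mf_continuousAt {x : ℝ} (hx : 0 < x) : ContinuousAt Mf x := by
  apply ContinuousAt.div
  · fun_prop
  · fun_prop
  · exact hx.ne'

def cube (n : ℕ) : Set (Fin n → ℝ) := {x | ∀ i, x i ∈ Set.Icc (0:ℝ) 1}

noncomputable def fchar (l : ℝ) : ℝ → ℝ :=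
  Set.indicator (Set.Icc 0 1) (fun s => Real.exp (-(l * s)))

lemma cube_eq_pi (n : ℕ) : cube n = Set.pi Set.univ (fun _ : Fin n => Set.Icc (0:ℝ) 1) := by
  ext x; simp only [cube, Set.mem_setOf_eq, Set.mem_pi, Set.mem_univ, true_implies]

lemma cube_meas (n : ℕ) : MeasurableSet (cube n) := by
  rw [cube_eq_pi]; exact MeasurableSet.univ_pi fun _ => measurableSet_Icc

lemma cube_compact (n : ℕ) : IsCompact (cube n) := by
  rw [cube_eq_pi]; exact isCompact_univ_pi fun _ => isCompact_Icc

lemma cube_vol (n : ℕ) : volume (cube n) = 1 := by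
  rw [cube_eq_pi, volume_pi_pi]
  simp [Real.volume_Icc]

lemma fchar_integrable (l : ℝ) : Integrable (fchar l) := by
  rw [fchar, integrable_indicator_iff measurableSet_Icc]
  exact ContinuousOn.integrableOn_compact isCompact_Icc (by fun_prop)

lemma integral_fchar {l : ℝ} (hl : 0 < l) : ∫ s, fchar l s = Mf l := by
  rw [fchar, integral_indicator measurableSet_Icc]; exact integral_exp_Icc hl

lemma cube_indicator_eq (n : ℕ) (l : ℝ) (x : Fin n → ℝ) :
    (cube n).indicator (fun x : Fin n → ℝ => Real.exp (-(l * ∑ i, x i))) x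
      = ∏ i, fchar l (x i) := by
  by_cases hx : x ∈ cube n
  · rw [Set.indicator_of_mem hx]
    have : ∀ i, fchar l (x i) = Real.exp (-(l * x i)) := fun i =>
      Set.indicator_of_mem (hx i) _
    simp only [this, ← Real.exp_sum]
    congr 1
    rw [Finset.mul_sum]
    simp
  · rw [Set.indicator_of_notMem hx]
    simp only [cube, Set.mem_setOf_eq, not_forall] at hx
    obtain ⟨i, hi⟩ := hx
    have h0 : fchar l (x i) = 0 := Set.indicator_of_notMem hi _
    exact (Finset.prod_eq_zero (Finset.mem_univ i) h0).symm

lemma integral_cube_exp {n : ℕ} {l : ℝ} (hl : 0 < l) :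
    ∫ x in cube n, Real.exp (-(l * ∑ i, x i)) = Mf l ^ n := by
  rw [← MeasureTheory.integral_indicator (cube_meas n)]
  rw [show ((cube n).indicator fun x : Fin n → ℝ => Real.exp (-(l * ∑ i, x i)))
      = fun x => ∏ i, fchar l (x i) from funext (cube_indicator_eq n l)]
  rw [MeasureTheory.volume_pi, MeasureTheory.integral_fintype_prod_eq_pow (ι := Fin n) (fchar l)]
  rw [integral_fchar hl, Fintype.card_fin]

noncomputable def Fa (l a : ℝ) {n : ℕ} (i j k : Fin n) : ℝ → ℝ :=
  Set.indicator (Set.Icc 0 1)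
    (fun s => Real.exp (-(l*s)) * ((if i = k then s - a else 1) * (if j = k then s - a else 1)))

noncomputable def J2 (l a : ℝ) : ℝ := ∫ s in Set.Icc (0:ℝ) 1, (s - a)^2 * Real.exp (-(l*s))

lemma Fa_pt (l a : ℝ) {n : ℕ} (i j k : Fin n) (s : ℝ) : Fa l a i j k s
    = fchar l s * ((if i = k then s - a else 1) * (if j = k then s - a else 1)) := by
  rw [Fa, Set.indicator_mul_left]
  rfl

lemma Fa_integrable (l a : ℝ) {n : ℕ} (i j k : Fin n) : Integrable (Fa l a i j k) := by
  rw [Fa, integrable_indicator_iff measurableSet_Icc]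
  apply ContinuousOn.integrableOn_compact isCompact_Icc
  apply Continuous.continuousOn
  by_cases hik : i = k <;> by_cases hjk : j = k <;> simp only [hik, hjk, if_true, if_false] <;>
    fun_prop

lemma integral_Fa {l : ℝ} (a : ℝ) (hl : 0 < l) (hma : a = mf l) {n : ℕ} (i j k : Fin n) :
    ∫ s, Fa l a i j k s
      = if i = k then (if j = k then J2 l a else 0) else (if j = k then 0 else Mf l) := by
  rw [Fa, MeasureTheory.integral_indicator measurableSet_Icc]
  by_cases hik : i = k <;> by_cases hjk : j = k <;>
    simp only [hik, hjk, if_true, if_false]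
  · rw [J2]; congr 1; funext s; ring
  · subst hma
    rw [MeasureTheory.setIntegral_congr_fun measurableSet_Icc
      (g := fun s => (s - mf l) * Real.exp (-(l*s))) (fun s _ => by ring)]
    exact integral_centered_exp hl
  · subst hma
    rw [MeasureTheory.setIntegral_congr_fun measurableSet_Icc
      (g := fun s => (s - mf l) * Real.exp (-(l*s))) (fun s _ => by ring)]
    exact integral_centered_exp hl
  · rw [MeasureTheory.setIntegral_congr_fun measurableSet_Icc
      (g := fun s => Real.exp (-(l*s))) (fun s _ => by ring)]
    exact integral_exp_Icc hl

lemma J2_le {l a : ℝ} (hl : 0 < l) (h0 : 0 ≤ a) (h1 : a ≤ 1) : J2 l a ≤ Mf l := by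
  rw [J2, ← integral_exp_Icc hl]
  apply MeasureTheory.setIntegral_mono_on
  · exact ContinuousOn.integrableOn_compact isCompact_Icc (by fun_prop)
  · exact ContinuousOn.integrableOn_compact isCompact_Icc (by fun_prop)
  · exact measurableSet_Icc
  · intro s hs
    obtain ⟨hs0, hs1⟩ := hs
    have hsq : (s - a)^2 ≤ 1 := by nlinarith
    nlinarith [Real.exp_pos (-(l*s))]

lemma integral_cube_var {n : ℕ} {l : ℝ} (hl : 0 < l) (h0 : 0 ≤ mf l) (h1 : mf l ≤ 1) :
    ∫ x in cube n, Real.exp (-(l * ∑ i, x i)) * (∑ i, x i - mf l * n)^2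
      ≤ n * Mf l ^ n := by
  set a := mf l with ha
  -- algebraic expansion
  have halg : ∀ x : Fin n → ℝ,
      ∑ i, ∑ j, ∏ k, Fa l a i j k (x k)
        = (∏ k, fchar l (x k)) * (∑ i, (x i - a))^2 := by
    intro x
    rw [sq, Finset.sum_mul_sum, Finset.mul_sum]
    apply Finset.sum_congr rfl
    intro i _
    rw [Finset.mul_sum]
    apply Finset.sum_congr rfl
    intro j _
    simp only [Fa_pt]
    rw [Finset.prod_mul_distrib, Finset.prod_mul_distrib, Finset.prod_ite_eq,
      Finset.prod_ite_eq]
    simp only [Finset.mem_univ, if_true]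
    try ring
  -- indicator identity
  have hind : ∀ x : Fin n → ℝ,
      (cube n).indicator (fun x : Fin n → ℝ =>
          Real.exp (-(l * ∑ i, x i)) * (∑ i, x i - a * n)^2) x
        = ∑ i, ∑ j, ∏ k, Fa l a i j k (x k) := by
    intro x
    rw [halg x]
    have hsum : ∑ i, (x i - a) = ∑ i, x i - a * n := by
      rw [Finset.sum_sub_distrib, Finset.sum_const, Finset.card_univ, Fintype.card_fin,
        nsmul_eq_mul]
      ring
    by_cases hx : x ∈ cube n
    · rw [Set.indicator_of_mem hx]
      have := cube_indicator_eq n l x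
      rw [Set.indicator_of_mem hx] at this
      rw [← this, hsum]
    · rw [Set.indicator_of_notMem hx]
      simp only [cube, Set.mem_setOf_eq, not_forall] at hx
      obtain ⟨i, hi⟩ := hx
      have h0' : fchar l (x i) = 0 := Set.indicator_of_notMem hi _
      rw [Finset.prod_eq_zero (Finset.mem_univ i) h0', zero_mul]
  -- main computation
  have hintprod : ∀ i j : Fin n, Integrable (fun x : Fin n → ℝ => ∏ k, Fa l a i j k (x k)) :=
    fun i j => Integrable.fintype_prod (fun k => Fa_integrable l a i j k)
  have hmain : ∫ x in cube n, Real.exp (-(l * ∑ i, x i)) * (∑ i, x i - a * n)^2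
      = ∑ i : Fin n, ∑ j : Fin n, ∏ k, ∫ s, Fa l a i j k s := by
    rw [← MeasureTheory.integral_indicator (cube_meas n)]
    rw [show ((cube n).indicator fun x : Fin n → ℝ =>
        Real.exp (-(l * ∑ i, x i)) * (∑ i, x i - a * n)^2)
        = fun x => ∑ i, ∑ j, ∏ k, Fa l a i j k (x k) from funext hind]
    rw [MeasureTheory.integral_finset_sum _ (fun i _ => integrable_finset_sum _
      (fun j _ => hintprod i j))]
    apply Finset.sum_congr rfl
    intro i _
    rw [MeasureTheory.integral_finset_sum _ (fun j _ => hintprod i j)]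
    apply Finset.sum_congr rfl
    intro j _
    exact MeasureTheory.integral_fintype_prod_eq_prod (ι := Fin n) (fun k => Fa l a i j k)
  -- evaluate the double sum
  have hdiag : ∀ i : Fin n, ∑ j : Fin n, ∏ k, ∫ s, Fa l a i j k s
      = J2 l a * Mf l ^ (n - 1) := by
    intro i
    rw [Finset.sum_eq_single i]
    · have heval : ∀ k, (∫ s, Fa l a i i k s) = if i = k then J2 l a else Mf l := by
        intro k
        rw [integral_Fa a hl ha i i k]
        by_cases hik : i = k <;> simp [hik]
      simp only [heval]
      rw [Finset.prod_eq_mul_prod_sdiff_singleton_of_mem (Finset.mem_univ i)]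
      simp only [if_true]
      have hrest : ∀ k ∈ Finset.univ \ {i}, (if i = k then J2 l a else Mf l) = Mf l := by
        intro k hk
        simp only [Finset.mem_sdiff, Finset.mem_singleton] at hk
        exact if_neg (fun h : i = k => hk.2 h.symm)
      rw [Finset.prod_congr rfl hrest, Finset.prod_const]
      congr 2
      rw [Finset.card_sdiff_of_subset (Finset.singleton_subset_iff.2 (Finset.mem_univ i))]
      simp
    · intro j _ hji
      apply Finset.prod_eq_zero (Finset.mem_univ j)
      rw [integral_Fa a hl ha i j j, if_neg (fun h : i = j => hji h.symm), if_pos rfl]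
    · intro h
      exact absurd (Finset.mem_univ i) h
  -- conclude
  rw [hmain]
  simp only [hdiag]
  rw [Finset.sum_const, Finset.card_univ, Fintype.card_fin, nsmul_eq_mul]
  rcases n with _ | m
  · simp
  · have hM : (0:ℝ) ≤ Mf l ^ m := le_of_lt (pow_pos (Mf_pos hl) m)
    have hstep : J2 l a * Mf l ^ (m + 1 - 1) ≤ Mf l ^ (m+1) := by
      simp only [Nat.add_sub_cancel]
      calc J2 l a * Mf l ^ m ≤ Mf l * Mf l ^ m :=
            mul_le_mul_of_nonneg_right (J2_le hl h0 h1) hM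
        _ = Mf l ^ (m+1) := by ring
    have hn : (0:ℝ) ≤ ((m:ℕ)+1 : ℕ) := by positivity
    calc (((m:ℕ)+1 : ℕ) : ℝ) * (J2 l a * Mf l ^ (m + 1 - 1))
          ≤ (((m:ℕ)+1 : ℕ) : ℝ) * Mf l ^ (m+1) := mul_le_mul_of_nonneg_left hstep hn
      _ = _ := by norm_num

lemma sum_continuous (n : ℕ) : Continuous (fun x : Fin n → ℝ => ∑ i, x i) :=
  continuous_finset_sum _ fun i _ => continuous_apply i

lemma truncCube_eq (n : ℕ) (t : ℝ) :
    truncCube n t = cube n ∩ {x | ∑ i, x i ≤ t} := rfl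

lemma truncCube_meas (n : ℕ) (t : ℝ) : MeasurableSet (truncCube n t) := by
  rw [truncCube_eq]
  exact (cube_meas n).inter (measurableSet_le (sum_continuous n).measurable measurable_const)

lemma truncCube_compact (n : ℕ) (t : ℝ) : IsCompact (truncCube n t) := by
  rw [truncCube_eq]
  exact (cube_compact n).inter_right (isClosed_le (sum_continuous n) continuous_const)

lemma truncCube_subset_cube (n : ℕ) (t : ℝ) : truncCube n t ⊆ cube n := fun x hx => hx.1

lemma truncCube_vol_le (n : ℕ) (t : ℝ) : volume (truncCube n t) ≤ 1 := by
  rw [← cube_vol n]; exact measure_mono (truncCube_subset_cube n t)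

lemma truncCube_vol_ne_top (n : ℕ) (t : ℝ) : volume (truncCube n t) ≠ ⊤ :=
  ne_top_of_le_ne_top ENNReal.one_ne_top (truncCube_vol_le n t)

lemma truncVol_le_one (n : ℕ) (t : ℝ) : truncVol n t ≤ 1 := by
  rw [truncVol]
  calc (volume (truncCube n t)).toReal ≤ (1 : ℝ≥0∞).toReal :=
        ENNReal.toReal_mono ENNReal.one_ne_top (truncCube_vol_le n t)
    _ = 1 := by simp

lemma truncVol_nonneg (n : ℕ) (t : ℝ) : 0 ≤ truncVol n t := ENNReal.toReal_nonneg

lemma truncVol_mono (n : ℕ) {s t : ℝ} (h : s ≤ t) : truncVol n s ≤ truncVol n t := by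
  apply ENNReal.toReal_mono (truncCube_vol_ne_top n t)
  exact measure_mono (fun x hx => ⟨hx.1, le_trans hx.2 h⟩)

lemma truncVol_pos {n : ℕ} (hn : 1 ≤ n) {t : ℝ} (ht : 0 < t) : 0 < truncVol n t := by
  set c := min (t / n) 1 with hc
  have hnpos : (0:ℝ) < n := by exact_mod_cast hn
  have hcpos : 0 < c := lt_min (by positivity) one_pos
  have hsub : Set.pi Set.univ (fun _ : Fin n => Set.Icc (0:ℝ) c) ⊆ truncCube n t := by
    intro x hx
    constructor
    · intro i
      have := hx i (Set.mem_univ i)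
      exact ⟨this.1, this.2.trans (min_le_right _ _)⟩
    · calc ∑ i, x i ≤ ∑ _i : Fin n, c :=
            Finset.sum_le_sum fun i _ => (hx i (Set.mem_univ i)).2
        _ = n * c := by rw [Finset.sum_const, Finset.card_univ, Fintype.card_fin, nsmul_eq_mul]
        _ ≤ n * (t / n) := by
            apply mul_le_mul_of_nonneg_left (min_le_left _ _) (le_of_lt hnpos)
        _ = t := by field_simp
  have hvol : volume (Set.pi Set.univ (fun _ : Fin n => Set.Icc (0:ℝ) c))
      = ENNReal.ofReal c ^ n := by
    rw [volume_pi_pi]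
    simp [Real.volume_Icc]
  have hpos : 0 < volume (truncCube n t) := by
    calc (0:ℝ≥0∞) < ENNReal.ofReal c ^ n := by
          apply ENNReal.pow_pos
          simp [ENNReal.ofReal_pos, hcpos]
      _ = volume (Set.pi Set.univ (fun _ : Fin n => Set.Icc (0:ℝ) c)) := hvol.symm
      _ ≤ volume (truncCube n t) := measure_mono hsub
  rw [truncVol]
  exact ENNReal.toReal_pos hpos.ne' (truncCube_vol_ne_top n t)

lemma exp_sum_integrableOn_cube (n : ℕ) (l : ℝ) :
    IntegrableOn (fun x : Fin n → ℝ => Real.exp (-(l * ∑ i, x i))) (cube n) :=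
  ContinuousOn.integrableOn_compact (cube_compact n) (by fun_prop)

-- Chernoff upper bound
lemma truncVol_chernoff {n : ℕ} {l t : ℝ} (hl : 0 < l) :
    truncVol n t ≤ Real.exp (l * t) * Mf l ^ n := by
  have hT := truncCube_meas n t
  have h1 : truncVol n t = ∫ _x in truncCube n t, (1:ℝ) := by
    rw [MeasureTheory.setIntegral_const, smul_eq_mul, mul_one, truncVol]
    rfl
  rw [h1]
  have h2 : ∫ _x in truncCube n t, (1:ℝ)
      ≤ ∫ x in truncCube n t, Real.exp (l * t) * Real.exp (-(l * ∑ i, x i)) := by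
    apply MeasureTheory.setIntegral_mono_on
    · exact integrableOn_const (ne_of_lt (lt_of_le_of_lt (truncCube_vol_le n t)
        ENNReal.one_lt_top))
    · exact ContinuousOn.integrableOn_compact (truncCube_compact n t) (by fun_prop)
    · exact hT
    · intro x hx
      rw [← Real.exp_add]
      apply Real.one_le_exp
      nlinarith [hx.2]
  have h3 : ∫ x in truncCube n t, Real.exp (l * t) * Real.exp (-(l * ∑ i, x i))
      = Real.exp (l * t) * ∫ x in truncCube n t, Real.exp (-(l * ∑ i, x i)) := by
    exact MeasureTheory.integral_const_mul _ _
  have h4 : ∫ x in truncCube n t, Real.exp (-(l * ∑ i, x i))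
      ≤ ∫ x in cube n, Real.exp (-(l * ∑ i, x i)) := by
    apply MeasureTheory.setIntegral_mono_set (exp_sum_integrableOn_cube n l)
    · filter_upwards with x using le_of_lt (Real.exp_pos _)
    · exact HasSubset.Subset.eventuallyLE (truncCube_subset_cube n t)
  calc ∫ _x in truncCube n t, (1:ℝ) ≤ _ := h2
    _ = _ := h3
    _ ≤ Real.exp (l * t) * (Mf l ^ n) := by
        rw [← integral_cube_exp hl]
        exact mul_le_mul_of_nonneg_left h4 (le_of_lt (Real.exp_pos _))

-- moment consequences
lemma moment_int_eq {n : ℕ} {t α : ℝ} (hn : 1 ≤ n) (ht : 0 < t)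
    (hm : truncMoment n t = α) :
    ∫ x in truncCube n t, ∑ i, x i = α * n * truncVol n t := by
  have hV := truncVol_pos hn ht
  have hnpos : (0:ℝ) < n := by exact_mod_cast hn
  rw [truncMoment] at hm
  field_simp at hm
  linarith [hm]

lemma sum_int_truncCube (n : ℕ) (t : ℝ) :
    IntegrableOn (fun x : Fin n → ℝ => ∑ i, x i) (truncCube n t) :=
  ContinuousOn.integrableOn_compact (truncCube_compact n t) (by fun_prop)

lemma t_ge_alpha_n {n : ℕ} {t α : ℝ} (hn : 1 ≤ n) (ht : 0 < t)
    (hm : truncMoment n t = α) : α * n ≤ t := by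
  have hV := truncVol_pos hn ht
  have hnpos : (0:ℝ) < n := by exact_mod_cast hn
  have h1 : ∫ x in truncCube n t, ∑ i, x i ≤ ∫ _x in truncCube n t, t := by
    apply MeasureTheory.setIntegral_mono_on (sum_int_truncCube n t)
      (integrableOn_const (ne_of_lt (lt_of_le_of_lt (truncCube_vol_le n t) ENNReal.one_lt_top)))
      (truncCube_meas n t)
    intro x hx
    exact hx.2
  rw [MeasureTheory.setIntegral_const, smul_eq_mul, moment_int_eq hn ht hm] at h1
  have := (truncVol_pos hn ht)
  rw [measureReal_def, ← truncVol] at h1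
  nlinarith [h1, this]

lemma ratio_bound {n : ℕ} {t α γ : ℝ} (hn : 1 ≤ n) (ht : 0 < t)
    (hα : 0 < α) (hγ : α < γ) (hm : truncMoment n t = α) :
    truncVol n t ≤ (γ / (γ - α)) * truncVol n (γ * n) := by
  have hnpos : (0:ℝ) < n := by exact_mod_cast hn
  have hγα : 0 < γ - α := by linarith
  have hratio : 1 ≤ γ / (γ - α) := by
    rw [le_div_iff₀ hγα]; linarith
  by_cases hcase : t ≤ γ * n
  · calc truncVol n t ≤ truncVol n (γ * n) := truncVol_mono n hcase
      _ ≤ (γ / (γ - α)) * truncVol n (γ * n) := by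
          nlinarith [truncVol_nonneg n (γ * n)]
  · push_neg at hcase
    set T := truncCube n t
    set Tγ := truncCube n (γ * n)
    have hsub : Tγ ⊆ T := fun x hx => ⟨hx.1, le_trans hx.2 (le_of_lt hcase)⟩
    have hDvol : (volume (T \ Tγ)).toReal = truncVol n t - truncVol n (γ * n) := by
      rw [measure_diff hsub (truncCube_meas n (γ * n)).nullMeasurableSet
        (truncCube_vol_ne_top n (γ * n))]
      rw [ENNReal.toReal_sub_of_le (measure_mono hsub) (truncCube_vol_ne_top n t)]
      rfl
    have hDmeas : MeasurableSet (T \ Tγ) :=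
      (truncCube_meas n t).diff (truncCube_meas n (γ * n))
    have h1 : ∫ x in T \ Tγ, ∑ i, x i ≤ ∫ x in T, ∑ i, x i := by
      apply MeasureTheory.setIntegral_mono_set (sum_int_truncCube n t)
      · apply MeasureTheory.ae_restrict_of_forall_mem (truncCube_meas n t)
        intro x hx
        exact Finset.sum_nonneg fun i _ => (hx.1 i).1
      · exact HasSubset.Subset.eventuallyLE Set.diff_subset
    have h2 : γ * n * (truncVol n t - truncVol n (γ * n)) ≤ ∫ x in T \ Tγ, ∑ i, x i := by
      have : ∫ _x in T \ Tγ, (γ * n) ≤ ∫ x in T \ Tγ, ∑ i, x i := by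
        apply MeasureTheory.setIntegral_mono_on
        · exact integrableOn_const (ne_of_lt (lt_of_le_of_lt
            (le_trans (measure_mono Set.diff_subset) (truncCube_vol_le n t))
            ENNReal.one_lt_top))
        · exact (sum_int_truncCube n t).mono_set Set.diff_subset
        · exact hDmeas
        · intro x hx
          obtain ⟨hxT, hxTγ⟩ := hx
          by_contra hlt
          push_neg at hlt
          exact hxTγ ⟨hxT.1, le_of_lt hlt⟩
      rw [MeasureTheory.setIntegral_const, smul_eq_mul, measureReal_def, hDvol] at this
      linarith
    have h3 := moment_int_eq hn ht hm
    have key : ((γ - α) * truncVol n t) * n ≤ (γ * truncVol n (γ * n)) * n := by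
      nlinarith [h1, h2, h3]
    have key2 : (γ - α) * truncVol n t ≤ γ * truncVol n (γ * n) :=
      le_of_mul_le_mul_right key hnpos
    rw [div_mul_eq_mul_div, le_div_iff₀ hγα]
    linarith

-- the tilted lower bound
lemma vol_lower {n : ℕ} {l aa b : ℝ} (hl : 0 < l) (h0 : 0 ≤ mf l) (h1 : mf l ≤ 1)
    (haa : aa < mf l) (hbb : mf l < b)
    (hn : 2 / (min (mf l - aa) (b - mf l))^2 ≤ n) :
    Real.exp (l * aa * n) * Mf l ^ n * (1/2) ≤ truncVol n (b * n) := by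
  set ε := min (mf l - aa) (b - mf l) with hε
  have hεpos : 0 < ε := lt_min (by linarith) (by linarith)
  have hnpos : (0:ℝ) < n := lt_of_lt_of_le (by positivity) hn
  have hMpos : 0 < Mf l ^ n := pow_pos (Mf_pos hl) n
  set W : Set (Fin n → ℝ) :=
    {x | (∀ i, x i ∈ Set.Icc (0:ℝ) 1) ∧ aa * n ≤ ∑ i, x i ∧ ∑ i, x i ≤ b * n} with hW
  have hWeq : W = cube n ∩ ({x | aa * n ≤ ∑ i, x i} ∩ {x | ∑ i, x i ≤ b * n}) := by
    ext x; simp [hW, cube, Set.mem_setOf_eq, and_assoc]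
  have hWmeas : MeasurableSet W := by
    rw [hWeq]
    exact (cube_meas n).inter
      ((measurableSet_le measurable_const (sum_continuous n).measurable).inter
       (measurableSet_le (sum_continuous n).measurable measurable_const))
  have hWsub : W ⊆ cube n := fun x hx => hx.1
  have hWcompact : IsCompact W := by
    rw [hWeq]
    exact (cube_compact n).inter_right
      ((isClosed_le continuous_const (sum_continuous n)).inter
       (isClosed_le (sum_continuous n) continuous_const))
  have hWT : W ⊆ truncCube n (b * n) := fun x hx => ⟨hx.1, hx.2.2⟩
  -- Chebyshev bound on the complement
  have hcheb : ∫ x in cube n \ W, Real.exp (-(l * ∑ i, x i)) ≤ Mf l ^ n / (ε^2 * n) := by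
    have hpt : ∀ x ∈ cube n \ W,
        Real.exp (-(l * ∑ i, x i))
          ≤ (1/(ε^2 * n^2)) * (Real.exp (-(l * ∑ i, x i)) * (∑ i, x i - mf l * n)^2) := by
      intro x hx
      obtain ⟨hxc, hxW⟩ := hx
      have hdev : ε * n ≤ |∑ i, x i - mf l * n| := by
        have : ¬(aa * n ≤ ∑ i, x i ∧ ∑ i, x i ≤ b * n) := fun h => hxW ⟨hxc, h⟩
        rw [not_and_or] at this
        rcases this with h | h
        · push_neg at h
          rw [abs_sub_comm, abs_of_nonneg (by nlinarith [min_le_left (mf l - aa) (b - mf l)])]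
          have := min_le_left (mf l - aa) (b - mf l)
          nlinarith
        · push_neg at h
          rw [abs_of_nonneg (by nlinarith [min_le_right (mf l - aa) (b - mf l)])]
          have := min_le_right (mf l - aa) (b - mf l)
          nlinarith
      have hsq : (ε * n)^2 ≤ (∑ i, x i - mf l * n)^2 := by
        rw [← sq_abs (∑ i, x i - mf l * n)]
        apply pow_le_pow_left₀ (by positivity) hdev
      have hexp := Real.exp_pos (-(l * ∑ i, x i))
      rw [← mul_assoc]
      have hfac : 1 ≤ (1/(ε^2 * n^2)) * (∑ i, x i - mf l * n)^2 := by
        rw [one_div, inv_mul_eq_div, le_div_iff₀ (by positivity)]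
        calc 1 * (ε^2 * n^2) = (ε * n)^2 := by ring
          _ ≤ _ := hsq
      calc Real.exp (-(l * ∑ i, x i)) = Real.exp (-(l * ∑ i, x i)) * 1 := by ring
        _ ≤ Real.exp (-(l * ∑ i, x i)) * ((1/(ε^2 * n^2)) * (∑ i, x i - mf l * n)^2) :=
            mul_le_mul_of_nonneg_left hfac (le_of_lt hexp)
        _ = 1 / (ε ^ 2 * ↑n ^ 2) * Real.exp (-(l * ∑ i, x i)) * (∑ i, x i - mf l * ↑n) ^ 2 := by
            ring
    have hint2 : IntegrableOn
        (fun x : Fin n → ℝ => (1/(ε^2 * n^2)) * (Real.exp (-(l * ∑ i, x i)) * (∑ i, x i - mf l * n)^2))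
        (cube n) := ContinuousOn.integrableOn_compact (cube_compact n) (by fun_prop)
    have step1 : ∫ x in cube n \ W, Real.exp (-(l * ∑ i, x i))
        ≤ ∫ x in cube n \ W,
            (1/(ε^2 * n^2)) * (Real.exp (-(l * ∑ i, x i)) * (∑ i, x i - mf l * n)^2) := by
      apply MeasureTheory.setIntegral_mono_on
      · exact (exp_sum_integrableOn_cube n l).mono_set Set.diff_subset
      · exact hint2.mono_set Set.diff_subset
      · exact (cube_meas n).diff hWmeas
      · exact hpt
    have step2 : ∫ x in cube n \ W,
          (1/(ε^2 * n^2)) * (Real.exp (-(l * ∑ i, x i)) * (∑ i, x i - mf l * n)^2)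
        ≤ ∫ x in cube n,
          (1/(ε^2 * n^2)) * (Real.exp (-(l * ∑ i, x i)) * (∑ i, x i - mf l * n)^2) := by
      apply MeasureTheory.setIntegral_mono_set hint2
      · filter_upwards with x
        positivity
      · exact HasSubset.Subset.eventuallyLE Set.diff_subset
    have step3 : ∫ x in cube n,
          (1/(ε^2 * n^2)) * (Real.exp (-(l * ∑ i, x i)) * (∑ i, x i - mf l * n)^2)
        ≤ (1/(ε^2 * n^2)) * (n * Mf l ^ n) := by
      rw [MeasureTheory.integral_const_mul]
      apply mul_le_mul_of_nonneg_left (integral_cube_var hl h0 h1) (by positivity)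
    calc ∫ x in cube n \ W, Real.exp (-(l * ∑ i, x i)) ≤ _ := step1
      _ ≤ _ := step2
      _ ≤ (1/(ε^2 * n^2)) * (n * Mf l ^ n) := step3
      _ = Mf l ^ n / (ε^2 * n) := by field_simp
  -- the integral over W is at least half of Mf^n
  have hsplit : ∫ x in cube n, Real.exp (-(l * ∑ i, x i))
      = (∫ x in W, Real.exp (-(l * ∑ i, x i)))
        + ∫ x in cube n \ W, Real.exp (-(l * ∑ i, x i)) := by
    rw [← MeasureTheory.setIntegral_union (Set.disjoint_sdiff_right)
      ((cube_meas n).diff hWmeas)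
      ((exp_sum_integrableOn_cube n l).mono_set hWsub)
      ((exp_sum_integrableOn_cube n l).mono_set Set.diff_subset)]
    rw [Set.union_diff_cancel hWsub]
  have hhalf : Mf l ^ n / (ε^2 * n) ≤ Mf l ^ n * (1/2) := by
    rw [div_le_iff₀ (by positivity)]
    have h2 : 2 ≤ ε^2 * n := by
      rw [div_le_iff₀ (by positivity)] at hn
      linarith
    nlinarith
  have hWlow : Mf l ^ n * (1/2) ≤ ∫ x in W, Real.exp (-(l * ∑ i, x i)) := by
    have := integral_cube_exp (n := n) hl
    rw [hsplit] at this
    nlinarith [hcheb, hhalf]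
  -- conclude
  have hVW : (volume W).toReal ≤ truncVol n (b * n) :=
    ENNReal.toReal_mono (truncCube_vol_ne_top n (b * n)) (measure_mono hWT)
  have hlast : Real.exp (l * aa * n) * ∫ x in W, Real.exp (-(l * ∑ i, x i))
      ≤ (volume W).toReal := by
    have hptW : ∀ x ∈ W, Real.exp (l * aa * n) * Real.exp (-(l * ∑ i, x i)) ≤ 1 := by
      intro x hx
      rw [← Real.exp_add]
      rw [Real.exp_le_one_iff]
      nlinarith [hx.2.1]
    have : ∫ x in W, Real.exp (l * aa * n) * Real.exp (-(l * ∑ i, x i))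
        ≤ ∫ _x in W, (1:ℝ) := by
      apply MeasureTheory.setIntegral_mono_on
      · exact (ContinuousOn.integrableOn_compact hWcompact (by fun_prop))
      · exact integrableOn_const (ne_of_lt (lt_of_le_of_lt
          (le_trans (measure_mono hWsub) (le_of_eq (cube_vol n))) ENNReal.one_lt_top))
      · exact hWmeas
      · exact hptW
    rw [MeasureTheory.integral_const_mul] at this
    rw [MeasureTheory.setIntegral_const, smul_eq_mul, mul_one] at this
    exact this
  calc Real.exp (l * aa * n) * Mf l ^ n * (1/2)
        = Real.exp (l * aa * n) * (Mf l ^ n * (1/2)) := by ring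
    _ ≤ Real.exp (l * aa * n) * ∫ x in W, Real.exp (-(l * ∑ i, x i)) :=
        mul_le_mul_of_nonneg_left hWlow (le_of_lt (Real.exp_pos _))
    _ ≤ (volume W).toReal := hlast
    _ ≤ truncVol n (b * n) := hVW

theorem log_max_shaping_gain_limit
    (α : ℝ) (hα : α ∈ Set.Ioo (0 : ℝ) (1 / 2))
    (μ : ℝ) (hμ : 0 < μ) (hμeq : α = 1 / μ - 1 / (Real.exp μ - 1))
    (t : ℕ → ℝ)
    (ht : ∀ n : ℕ, 1 ≤ n → t n ∈ Set.Ioo (0 : ℝ) n ∧ truncMoment n (t n) = α)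
    (hmax : ℝ) (hhmax : hmax = μ * α - Real.log (μ / (1 - Real.exp (-μ)))) :
    Tendsto (fun n : ℕ => (1 / (n : ℝ)) * Real.log (truncVol n (t n))) atTop
      (nhds hmax) ∧
    Tendsto (fun n : ℕ => Real.log (truncVol n (t n) ^ ((1 : ℝ) / n) / (2 * α)))
      atTop (nhds (hmax - Real.log (2 * α))) := by
  obtain ⟨hα0, hα2⟩ := hα
  have hmf : mf μ = α := by rw [mf, ← hμeq]
  have hmaxeq : hmax = μ * α + Real.log (Mf μ) := by
    rw [hhmax]
    have h : μ / (1 - Real.exp (-μ)) = (Mf μ)⁻¹ := by rw [Mf, inv_div]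
    rw [h, Real.log_inv]
    ring
  have hmain : Tendsto (fun n : ℕ => (1 / (n : ℝ)) * Real.log (truncVol n (t n))) atTop
      (nhds hmax) := by
    rw [Metric.tendsto_atTop]
    intro ε hε
    -- upper bound data
    obtain ⟨γ, hγdef⟩ : ∃ γ : ℝ, γ = α + ε / (4 * μ) := ⟨_, rfl⟩
    have hεμ : 0 < ε / (4 * μ) := by positivity
    have hγ : α < γ := by rw [hγdef]; linarith
    obtain ⟨C, hCdef⟩ : ∃ C : ℝ, C = γ / (γ - α) := ⟨_, rfl⟩
    have hCpos : 0 < C := by rw [hCdef]; exact div_pos (by linarith) (by linarith)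
    -- lower bound data
    obtain ⟨G, hGdef⟩ : ∃ G : ℝ → ℝ, G = fun l => l * mf l + Real.log (Mf l) := ⟨_, rfl⟩
    have hGcont : ContinuousAt G μ := by
      rw [hGdef]
      apply ContinuousAt.add
      · exact continuousAt_id.mul (mf_continuousAt hμ)
      · exact (Real.continuousAt_log (Mf_pos hμ).ne').comp (Mf_continuousAt hμ)
    have hGμ : G μ = hmax := by
      rw [hGdef]
      simp only [hmf]
      rw [hmaxeq]
    obtain ⟨δ, hδ0, hδ⟩ := Metric.continuousAt_iff.1 hGcont (ε/4) (by positivity)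
    obtain ⟨μ', hμ'def⟩ : ∃ μ' : ℝ, μ' = μ + δ/2 := ⟨_, rfl⟩
    have hμ'pos : 0 < μ' := by rw [hμ'def]; positivity
    have hμμ' : μ < μ' := by rw [hμ'def]; linarith
    have hGμ' : |G μ' - hmax| < ε/4 := by
      have hd : dist μ' μ < δ := by
        rw [Real.dist_eq, hμ'def, show μ + δ/2 - μ = δ/2 by ring, abs_of_nonneg (by linarith)]
        linarith
      have := hδ hd
      rwa [Real.dist_eq, hGμ] at this
    obtain ⟨α', hα'def⟩ : ∃ α' : ℝ, α' = mf μ' := ⟨_, rfl⟩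
    have hα'lt : α' < α := by
      rw [hα'def, ← hmf]
      exact mf_strictAntiOn (Set.mem_Ioi.2 hμ) (Set.mem_Ioi.2 hμ'pos) hμμ'
    have hα'0 : 0 ≤ α' := hα'def ▸ mf_nonneg hμ'pos
    have hα'1 : α' ≤ 1 := by linarith
    obtain ⟨aa, haadef⟩ : ∃ aa : ℝ, aa = α' - ε / (4 * (μ' + 1)) := ⟨_, rfl⟩
    have hεμ' : 0 < ε / (4 * (μ' + 1)) := by positivity
    have haalt : aa < α' := by rw [haadef]; linarith
    have hμ'aa : μ' * (α' - aa) ≤ ε/4 := by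
      rw [haadef, show α' - (α' - ε / (4 * (μ' + 1))) = ε / (4 * (μ' + 1)) by ring]
      rw [show μ' * (ε / (4 * (μ' + 1))) = ε * μ' / (4 * (μ' + 1)) by ring]
      rw [div_le_iff₀ (by positivity)]
      nlinarith
    have hexp_low : hmax - ε/2 ≤ μ' * aa + Real.log (Mf μ') := by
      have h1 : μ' * aa + Real.log (Mf μ') = G μ' - μ' * (α' - aa) := by
        rw [hGdef]
        simp only [← hα'def]
        ring
      have h2 : hmax - ε/4 ≤ G μ' := by linarith [(abs_lt.1 hGμ').1]
      rw [h1]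
      linarith
    obtain ⟨ε₀, hε₀def⟩ : ∃ e : ℝ, e = min (α' - aa) (α - α') := ⟨_, rfl⟩
    have hε₀pos : 0 < ε₀ := by
      rw [hε₀def]
      exact lt_min (by linarith) (by linarith)
    -- eventual bounds
    have E2 : ∀ᶠ n : ℕ in atTop, 2 / ε₀^2 ≤ (n:ℝ) :=
      tendsto_natCast_atTop_atTop.eventually_ge_atTop _
    have E3 : ∀ᶠ n : ℕ in atTop, |Real.log C / (n:ℝ)| < ε/4 := by
      have h := tendsto_const_div_atTop_nhds_zero_nat (Real.log C)
      rw [Metric.tendsto_atTop] at h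
      obtain ⟨N, hN⟩ := h (ε/4) (by positivity)
      filter_upwards [eventually_ge_atTop N] with n hn
      have := hN n hn
      rwa [Real.dist_eq, sub_zero] at this
    have E4 : ∀ᶠ n : ℕ in atTop, |Real.log 2 / (n:ℝ)| < ε/4 := by
      have h := tendsto_const_div_atTop_nhds_zero_nat (Real.log 2)
      rw [Metric.tendsto_atTop] at h
      obtain ⟨N, hN⟩ := h (ε/4) (by positivity)
      filter_upwards [eventually_ge_atTop N] with n hn
      have := hN n hn
      rwa [Real.dist_eq, sub_zero] at this
    rw [← eventually_atTop]
    filter_upwards [eventually_ge_atTop 1, E2, E3, E4] with n hn1 hn2 hn3 hn4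
    have hnpos : (0:ℝ) < n := by exact_mod_cast hn1
    have hnne : (n:ℝ) ≠ 0 := hnpos.ne'
    obtain ⟨⟨htn0, _htn1⟩, hmom⟩ := ht n hn1
    have hV := truncVol_pos hn1 htn0
    have hMμpos : 0 < Mf μ ^ n := pow_pos (Mf_pos hμ) n
    have hMμ'pos : 0 < Mf μ' ^ n := pow_pos (Mf_pos hμ'pos) n
    -- UPPER BOUND
    have hup : (1 / (n : ℝ)) * Real.log (truncVol n (t n)) ≤ hmax + ε/2 := by
      have hch : truncVol n (γ * n) ≤ Real.exp (μ * (γ * n)) * Mf μ ^ n :=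
        truncVol_chernoff hμ
      have hrat := ratio_bound hn1 htn0 hα0 hγ hmom
      rw [← hCdef] at hrat
      have hchain : truncVol n (t n) ≤ C * (Real.exp (μ * (γ * n)) * Mf μ ^ n) := by
        calc truncVol n (t n) ≤ C * truncVol n (γ * n) := hrat
          _ ≤ C * (Real.exp (μ * (γ * n)) * Mf μ ^ n) :=
              mul_le_mul_of_nonneg_left hch (le_of_lt hCpos)
      have hlog : Real.log (truncVol n (t n))
          ≤ Real.log C + (μ * (γ * n) + n * Real.log (Mf μ)) := by
        calc Real.log (truncVol n (t n))
            ≤ Real.log (C * (Real.exp (μ * (γ * n)) * Mf μ ^ n)) :=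
              Real.log_le_log hV hchain
          _ = Real.log C + (μ * (γ * n) + n * Real.log (Mf μ)) := by
              rw [Real.log_mul hCpos.ne'
                  (mul_pos (Real.exp_pos _) hMμpos).ne',
                Real.log_mul (Real.exp_ne_zero _) hMμpos.ne',
                Real.log_exp, Real.log_pow]
      have hstep : (1 / (n : ℝ)) * Real.log (truncVol n (t n))
          ≤ (1 / (n : ℝ)) * (Real.log C + (μ * (γ * n) + n * Real.log (Mf μ))) :=
        mul_le_mul_of_nonneg_left hlog (by positivity)
      have hsimp : (1 / (n : ℝ)) * (Real.log C + (μ * (γ * n) + n * Real.log (Mf μ)))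
          = Real.log C / n + (μ * γ + Real.log (Mf μ)) := by
        field_simp
      have habs : Real.log C / n ≤ ε/4 := le_of_lt (lt_of_le_of_lt (le_abs_self _) hn3)
      have hexpand : μ * γ + Real.log (Mf μ) = hmax + μ * (ε / (4 * μ)) := by
        rw [hγdef, hmaxeq]; ring
      have hμε : μ * (ε / (4 * μ)) = ε/4 := by field_simp
      calc (1 / (n : ℝ)) * Real.log (truncVol n (t n))
          ≤ Real.log C / n + (μ * γ + Real.log (Mf μ)) := by rw [← hsimp]; exact hstep
        _ = Real.log C / n + hmax + ε/4 := by rw [hexpand, hμε]; ring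
        _ ≤ hmax + ε/2 := by linarith
    -- LOWER BOUND
    have hlow : hmax - 3*ε/4 ≤ (1 / (n : ℝ)) * Real.log (truncVol n (t n)) := by
      have hbound := vol_lower (n := n) (l := μ') (aa := aa) (b := α) hμ'pos
        (mf_nonneg hμ'pos) (by rw [← hα'def]; exact hα'1)
        (by rw [← hα'def]; exact haalt) (by rw [← hα'def]; exact hα'lt)
        (by rw [← hα'def, ← hε₀def]; exact hn2)
      have hαn : α * n ≤ t n := t_ge_alpha_n hn1 htn0 hmom
      have hVmono : truncVol n (α * n) ≤ truncVol n (t n) := truncVol_mono n hαn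
      have hBpos : 0 < Real.exp (μ' * aa * n) * Mf μ' ^ n * (1/2) :=
        mul_pos (mul_pos (Real.exp_pos _) hMμ'pos) (by norm_num)
      have hlog2 : Real.log (Real.exp (μ' * aa * n) * Mf μ' ^ n * (1/2))
          ≤ Real.log (truncVol n (t n)) :=
        Real.log_le_log hBpos (le_trans hbound hVmono)
      have hlogval : Real.log (Real.exp (μ' * aa * n) * Mf μ' ^ n * (1/2))
          = μ' * aa * n + n * Real.log (Mf μ') - Real.log 2 := by
        rw [Real.log_mul (mul_pos (Real.exp_pos _) hMμ'pos).ne' (by norm_num),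
          Real.log_mul (Real.exp_ne_zero _) hMμ'pos.ne',
          Real.log_exp, Real.log_pow]
        rw [show (1/2 : ℝ) = 2⁻¹ by norm_num, Real.log_inv]
        ring
      have hstep : (1 / (n : ℝ)) * (μ' * aa * n + n * Real.log (Mf μ') - Real.log 2)
          ≤ (1 / (n : ℝ)) * Real.log (truncVol n (t n)) := by
        apply mul_le_mul_of_nonneg_left _ (by positivity)
        rw [← hlogval]; exact hlog2
      have hsimp : (1 / (n : ℝ)) * (μ' * aa * n + n * Real.log (Mf μ') - Real.log 2)
          = (μ' * aa + Real.log (Mf μ')) - Real.log 2 / n := by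
        field_simp
      have h4 : -(ε/4) ≤ -(Real.log 2 / n) := by
        have := (abs_lt.1 hn4).2
        linarith [le_abs_self (Real.log 2 / (n:ℝ))]
      calc hmax - 3*ε/4 = (hmax - ε/2) - ε/4 := by ring
        _ ≤ (μ' * aa + Real.log (Mf μ')) - Real.log 2 / n := by linarith [hexp_low, h4]
        _ = (1 / (n : ℝ)) * (μ' * aa * n + n * Real.log (Mf μ') - Real.log 2) := hsimp.symm
        _ ≤ _ := hstep
    rw [Real.dist_eq, abs_lt]
    constructor <;> linarith
  refine ⟨hmain, ?_⟩
  have hcongr : ∀ᶠ n : ℕ in atTop,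
      (1 / (n : ℝ)) * Real.log (truncVol n (t n)) - Real.log (2 * α)
        = Real.log (truncVol n (t n) ^ ((1 : ℝ) / n) / (2 * α)) := by
    filter_upwards [eventually_ge_atTop 1] with n hn1
    obtain ⟨⟨htn0, _⟩, _⟩ := ht n hn1
    have hV := truncVol_pos hn1 htn0
    have hrp : (0:ℝ) < truncVol n (t n) ^ ((1 : ℝ) / n) := Real.rpow_pos_of_pos hV _
    rw [Real.log_div hrp.ne' (by positivity), Real.log_rpow hV]
  exact Tendsto.congr' hcongr (hmain.sub tendsto_const_nhds)
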